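/- Let G be a weighted graph with sup_x Deg(x) ≤ D, base vertex p, and let a: V → ℝ satisfy |Δ^k a(x)| ≤ A₃·(2D)^k·exp(A₄·(k + d(x,p))·ln(k + d(x,p))) for all k ≥ 0, where A₃ > 0 and 0 < A₄ < 1. Then for any δ < 1/(2De), the series v(x,t) = Σ_{k≥0} Δ^k a(x)·t^k/k! converges absolutely and uniformly on B_R(p) × (−δ, 0] for every R ≥ 1. -/

import Mathlib

open Real Filter

/-- A weighted graph: symmetric nonnegative edge weights, positive vertex
weights, locally finite. -/
structure WeightedGraph (V : Type*) where
  ω : V → V → ℝ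
  μ : V → ℝ
  symm : ∀ x y, ω x y = ω y x
  nonneg : ∀ x y, 0 ≤ ω x y
  loopless : ∀ x, ω x x = 0
  μ_pos : ∀ x, 0 < μ x
  locFin : ∀ x, (Function.support (ω x)).Finite

namespace WeightedGraph

variable {V : Type*}

/-- The graph Laplacian Δf(x) = Σ_y (ω_{xy}/μ_x)(f(y) - f(x)). -/
noncomputable def lap (G : WeightedGraph V) (f : V → ℝ) (x : V) : ℝ :=
  ∑' y, (G.ω x y / G.μ x) * (f y - f x)

/-- The weighted degree Deg(x) = Σ_y ω_{xy}/μ_x. -/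
noncomputable def deg (G : WeightedGraph V) (x : V) : ℝ :=
  ∑' y, G.ω x y / G.μ x

/-- The underlying simple graph: x ~ y iff ω_{xy} ≠ 0. -/
def adj (G : WeightedGraph V) : SimpleGraph V :=
  SimpleGraph.fromRel (fun x y => G.ω x y ≠ 0)

/-- The combinatorial graph distance. -/
noncomputable def dist (G : WeightedGraph V) (x y : V) : ℕ := G.adj.dist x y

/-- Iterated Laplacian Δ^k. -/
noncomputable def lapIter (G : WeightedGraph V) : ℕ → (V → ℝ) → (V → ℝ)
  | 0, f => f
  | (k+1), f => G.lap (G.lapIter k f)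

end WeightedGraph


private lemma aux_mul_log {s S : ℝ} (hs : s = 0 ∨ 1 ≤ s) (hsS : s ≤ S) (hS : 1 ≤ S) :
    s * Real.log s ≤ S * Real.log S := by
  have hSl : 0 ≤ Real.log S := Real.log_nonneg hS
  rcases hs with h | h
  · rw [h]
    simp
    positivity
  · have h0 : 0 ≤ Real.log s := Real.log_nonneg h
    have h1 : Real.log s ≤ Real.log S := Real.log_le_log (by linarith) hsS
    nlinarith

/-- the series Σ Δ^k a(x) t^k/k! converges absolutely and
uniformly on B_R(p) × (−δ, 0]. -/
theorem series_converges_absolutely_uniformly {V : Type*} (G : WeightedGraph V)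
    (hconn : G.adj.Connected) (p : V) (D A₃ A₄ δ : ℝ)
    (hD : ∀ x, G.deg x ≤ D) (hA₃ : 0 < A₃) (hA₄0 : 0 < A₄) (hA₄1 : A₄ < 1)
    (a : V → ℝ)
    (ha : ∀ (k : ℕ) (x : V), |G.lapIter k a x| ≤
      A₃ * (2 * D) ^ k * Real.exp (A₄ * ((k : ℝ) + (G.dist x p : ℝ)) *
        Real.log ((k : ℝ) + (G.dist x p : ℝ))))
    (hδ0 : 0 < δ) (hδ : δ < 1 / (2 * D * Real.exp 1)) :
    ∀ R : ℝ, 1 ≤ R →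
      (∀ q : V × ℝ, q ∈ {x : V | (G.dist x p : ℝ) ≤ R} ×ˢ Set.Ioc (-δ) (0:ℝ) →
        Summable (fun k : ℕ => |G.lapIter k a q.1 * q.2 ^ k / (Nat.factorial k : ℝ)|)) ∧
      TendstoUniformlyOn
        (fun (n : ℕ) (q : V × ℝ) =>
          ∑ k ∈ Finset.range n, G.lapIter k a q.1 * q.2 ^ k / (Nat.factorial k : ℝ))
        (fun q => ∑' k : ℕ, G.lapIter k a q.1 * q.2 ^ k / (Nat.factorial k : ℝ))
        Filter.atTop ({x : V | (G.dist x p : ℝ) ≤ R} ×ˢ Set.Ioc (-δ) (0:ℝ)) := by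
  intro R hR
  have hD0 : 0 < D := by
    by_contra h
    push_neg at h
    have he : 0 < Real.exp 1 := Real.exp_pos 1
    have h2 : 1 / (2 * D * Real.exp 1) ≤ 0 := by
      apply one_div_nonpos.mpr
      nlinarith
    linarith
  set c0 : ℝ := 2 * D * δ with hc0def
  have hc0 : 0 < c0 := by positivity
  set M : ℕ → ℝ := fun k =>
    A₃ * c0 ^ k * Real.exp (A₄ * ((k : ℝ) + R) * Real.log ((k : ℝ) + R)) /
      (Nat.factorial k : ℝ) with hMdef
  have hMpos : ∀ k, 0 < M k := by
    intro k
    have : (0:ℝ) < (Nat.factorial k : ℝ) := by positivity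
    positivity
  -- Summability of the majorant via the ratio test
  have hsum : Summable M := by
    apply summable_of_ratio_norm_eventually_le (r := 1/2) (by norm_num)
    set C : ℝ := c0 * Real.exp A₄ * (1 + R) with hCdef
    have hC : 0 < C := by positivity
    have h1 : Tendsto (fun k : ℕ => ((k : ℝ) + 1 + R)) atTop atTop := by
      have := tendsto_atTop_add_const_right atTop (1 + R)
        (tendsto_natCast_atTop_atTop (R := ℝ))
      simpa [add_assoc] using this
    have h2 : Tendsto (fun k : ℕ => ((k : ℝ) + 1 + R) ^ (A₄ - 1)) atTop (nhds 0) := by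
      have := (tendsto_rpow_neg_atTop (by linarith : (0:ℝ) < 1 - A₄)).comp h1
      simpa [Function.comp_def, neg_sub] using this
    have h3 : Tendsto (fun k : ℕ => C * ((k : ℝ) + 1 + R) ^ (A₄ - 1)) atTop (nhds 0) := by
      simpa using h2.const_mul C
    filter_upwards [h3.eventually_le_const (by norm_num : (0:ℝ) < 1/2)] with k hk
    have hknn : (0:ℝ) ≤ (k : ℝ) := Nat.cast_nonneg k
    have hS : (0:ℝ) < (k : ℝ) + R := by linarith
    have hS' : (0:ℝ) < (k : ℝ) + 1 + R := by linarith
    set S : ℝ := (k : ℝ) + R with hSdef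
    set S' : ℝ := (k : ℝ) + 1 + R with hS'def
    have hSS' : S' = S + 1 := by rw [hSdef, hS'def]; ring
    -- the key log increment inequality
    have hlog : Real.log S' - Real.log S ≤ 1 / S := by
      rw [← Real.log_div (ne_of_gt hS') (ne_of_gt hS)]
      have h4 := Real.log_le_sub_one_of_pos (show (0:ℝ) < S' / S by positivity)
      have h5 : S' / S - 1 = 1 / S := by
        field_simp
        rw [hSS']
        ring
      linarith
    have h6 : S * (Real.log S' - Real.log S) ≤ 1 := by
      calc S * (Real.log S' - Real.log S) ≤ S * (1 / S) :=
            mul_le_mul_of_nonneg_left hlog hS.le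
        _ = 1 := by field_simp
    have hkey : S' * Real.log S' ≤ S * Real.log S + (Real.log S' + 1) := by
      have h7 : S' * Real.log S' = S * Real.log S' + Real.log S' := by rw [hSS']; ring
      nlinarith [h6, h7]
    have hexp : Real.exp (A₄ * S' * Real.log S') ≤
        Real.exp (A₄ * S * Real.log S) * (Real.exp A₄ * S' ^ A₄) := by
      have heq : Real.exp (A₄ * S * Real.log S + A₄ * (Real.log S' + 1)) =
          Real.exp (A₄ * S * Real.log S) * (Real.exp A₄ * S' ^ A₄) := by
        rw [Real.exp_add]
        congr 1
        rw [mul_add, mul_one, Real.exp_add, Real.rpow_def_of_pos hS']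
        ring_nf
      calc Real.exp (A₄ * S' * Real.log S')
          ≤ Real.exp (A₄ * S * Real.log S + A₄ * (Real.log S' + 1)) := by
            apply Real.exp_le_exp.mpr
            nlinarith [mul_le_mul_of_nonneg_left hkey hA₄0.le]
        _ = _ := heq
    -- combine with 1/(k+1) ≤ (1+R)/S'
    have hk1 : (0:ℝ) < (k : ℝ) + 1 := by linarith
    have hpow : (0:ℝ) < S' ^ A₄ := Real.rpow_pos_of_pos hS' A₄
    have hfrac : (1:ℝ) / ((k : ℝ) + 1) ≤ (1 + R) / S' := by
      rw [div_le_div_iff₀ hk1 hS']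
      nlinarith
    have hrp : S' ^ (A₄ - 1) = S' ^ A₄ / S' := by
      rw [Real.rpow_sub hS', Real.rpow_one]
    have hstep : c0 * Real.exp (A₄ * S' * Real.log S') / ((k : ℝ) + 1) ≤
        (1/2) * Real.exp (A₄ * S * Real.log S) := by
      have hE : (0:ℝ) < Real.exp (A₄ * S * Real.log S) := Real.exp_pos _
      have step1 : c0 * Real.exp (A₄ * S' * Real.log S') / ((k : ℝ) + 1) ≤
          c0 * (Real.exp (A₄ * S * Real.log S) * (Real.exp A₄ * S' ^ A₄)) / ((k : ℝ) + 1) := by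
        gcongr
      have step2 : c0 * (Real.exp (A₄ * S * Real.log S) * (Real.exp A₄ * S' ^ A₄)) / ((k : ℝ) + 1)
          = (c0 * Real.exp A₄ * S' ^ A₄ * (1 / ((k : ℝ) + 1))) * Real.exp (A₄ * S * Real.log S) := by
        field_simp
      have step3 : c0 * Real.exp A₄ * S' ^ A₄ * (1 / ((k : ℝ) + 1)) ≤
          c0 * Real.exp A₄ * S' ^ A₄ * ((1 + R) / S') := by
        gcongr
      have step4 : c0 * Real.exp A₄ * S' ^ A₄ * ((1 + R) / S') = C * S' ^ (A₄ - 1) := by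
        rw [hrp, hCdef]
        field_simp
      calc c0 * Real.exp (A₄ * S' * Real.log S') / ((k : ℝ) + 1)
          ≤ c0 * (Real.exp (A₄ * S * Real.log S) * (Real.exp A₄ * S' ^ A₄)) / ((k : ℝ) + 1) := step1
        _ = (c0 * Real.exp A₄ * S' ^ A₄ * (1 / ((k : ℝ) + 1))) * Real.exp (A₄ * S * Real.log S) := step2
        _ ≤ (C * S' ^ (A₄ - 1)) * Real.exp (A₄ * S * Real.log S) := by
            apply mul_le_mul_of_nonneg_right _ hE.le
            rw [← step4]; exact step3
        _ ≤ (1/2) * Real.exp (A₄ * S * Real.log S) :=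
            mul_le_mul_of_nonneg_right hk hE.le
    -- now conclude the ratio bound
    rw [Real.norm_eq_abs, Real.norm_eq_abs, abs_of_pos (hMpos _), abs_of_pos (hMpos _)]
    have hfacpos : (0:ℝ) < (Nat.factorial k : ℝ) := by positivity
    have hfac : ((Nat.factorial (k+1)) : ℝ) = ((k : ℝ) + 1) * (Nat.factorial k : ℝ) := by
      rw [Nat.factorial_succ]; push_cast; ring
    have hMk1 : M (k+1) = (A₃ * c0 ^ k / (Nat.factorial k : ℝ)) *
        (c0 * Real.exp (A₄ * S' * Real.log S') / ((k : ℝ) + 1)) := by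
      rw [hMdef]
      simp only
      rw [hfac]
      have : ((k:ℕ)+1 : ℝ) + R = S' := by push_cast [hS'def]; ring
      rw [show (((k+1:ℕ)) : ℝ) = (k : ℝ) + 1 by push_cast; ring]
      rw [show ((k : ℝ) + 1 + R) = S' from rfl]
      field_simp
      ring
    have hMk : M k = (A₃ * c0 ^ k / (Nat.factorial k : ℝ)) *
        Real.exp (A₄ * S * Real.log S) := by
      rw [hMdef]
      simp only
      field_simp
      rw [hSdef]
    rw [hMk1, hMk]
    have hpos2 : (0:ℝ) ≤ A₃ * c0 ^ k / (Nat.factorial k : ℝ) := by positivity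
    calc (A₃ * c0 ^ k / (Nat.factorial k : ℝ)) *
          (c0 * Real.exp (A₄ * S' * Real.log S') / ((k : ℝ) + 1))
        ≤ (A₃ * c0 ^ k / (Nat.factorial k : ℝ)) *
          ((1/2) * Real.exp (A₄ * S * Real.log S)) :=
          mul_le_mul_of_nonneg_left hstep hpos2
      _ = 1/2 * ((A₃ * c0 ^ k / (Nat.factorial k : ℝ)) * Real.exp (A₄ * S * Real.log S)) := by ring
  -- the pointwise bound
  have hbound : ∀ (k : ℕ) (q : V × ℝ),
      q ∈ {x : V | (G.dist x p : ℝ) ≤ R} ×ˢ Set.Ioc (-δ) (0:ℝ) →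
      |G.lapIter k a q.1 * q.2 ^ k / (Nat.factorial k : ℝ)| ≤ M k := by
    intro k q hq
    obtain ⟨hd, ht⟩ := hq
    set x := q.1
    set t := q.2
    have hdR : ((G.dist x p : ℕ) : ℝ) ≤ R := hd
    have htabs : |t| ≤ δ := abs_le.mpr ⟨ht.1.le, by linarith [ht.2]⟩
    have hknn : (0:ℝ) ≤ (k : ℝ) := Nat.cast_nonneg k
    have hdnn : (0:ℝ) ≤ ((G.dist x p : ℕ) : ℝ) := Nat.cast_nonneg _
    have hSpos : (1:ℝ) ≤ (k : ℝ) + R := by linarith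
    have hcase : ((k : ℝ) + (G.dist x p : ℝ)) = 0 ∨ 1 ≤ ((k : ℝ) + (G.dist x p : ℝ)) := by
      rcases Nat.eq_zero_or_pos (k + G.dist x p) with h | h
      · left
        have : ((k + G.dist x p : ℕ) : ℝ) = 0 := by rw [h]; simp
        push_cast at this
        linarith
      · right
        have : (1:ℝ) ≤ ((k + G.dist x p : ℕ) : ℝ) := by exact_mod_cast h
        push_cast at this
        linarith
    have hml : ((k : ℝ) + (G.dist x p : ℝ)) * Real.log ((k : ℝ) + (G.dist x p : ℝ)) ≤
        ((k : ℝ) + R) * Real.log ((k : ℝ) + R) :=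
      aux_mul_log hcase (by linarith) hSpos
    have hexp : Real.exp (A₄ * ((k : ℝ) + (G.dist x p : ℝ)) *
          Real.log ((k : ℝ) + (G.dist x p : ℝ))) ≤
        Real.exp (A₄ * ((k : ℝ) + R) * Real.log ((k : ℝ) + R)) := by
      apply Real.exp_le_exp.mpr
      calc A₄ * ((k : ℝ) + (G.dist x p : ℝ)) * Real.log ((k : ℝ) + (G.dist x p : ℝ))
          = A₄ * (((k : ℝ) + (G.dist x p : ℝ)) * Real.log ((k : ℝ) + (G.dist x p : ℝ))) := by ring
        _ ≤ A₄ * (((k : ℝ) + R) * Real.log ((k : ℝ) + R)) :=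
            mul_le_mul_of_nonneg_left hml hA₄0.le
        _ = A₄ * ((k : ℝ) + R) * Real.log ((k : ℝ) + R) := by ring
    have hfacpos : (0:ℝ) < (Nat.factorial k : ℝ) := by positivity
    have h2D : (0:ℝ) ≤ 2 * D := by linarith
    rw [abs_div, abs_mul, abs_pow, Nat.abs_cast]
    have hM : M k = A₃ * (2 * D) ^ k * δ ^ k *
        Real.exp (A₄ * ((k : ℝ) + R) * Real.log ((k : ℝ) + R)) / (Nat.factorial k : ℝ) := by
      rw [hMdef]
      simp only
      rw [hc0def, show (2 * D * δ) ^ k = (2 * D) ^ k * δ ^ k from mul_pow _ _ _]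
      ring
    rw [hM]
    apply div_le_div_of_nonneg_right _ hfacpos.le
    calc |G.lapIter k a x| * |t| ^ k
        ≤ (A₃ * (2 * D) ^ k * Real.exp (A₄ * ((k : ℝ) + (G.dist x p : ℝ)) *
            Real.log ((k : ℝ) + (G.dist x p : ℝ)))) * δ ^ k := by
          apply mul_le_mul (ha k x) (pow_le_pow_left₀ (abs_nonneg t) htabs k)
            (pow_nonneg (abs_nonneg t) k)
          positivity
      _ ≤ (A₃ * (2 * D) ^ k * Real.exp (A₄ * ((k : ℝ) + R) * Real.log ((k : ℝ) + R))) * δ ^ k := by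
          apply mul_le_mul_of_nonneg_right _ (by positivity)
          apply mul_le_mul_of_nonneg_left hexp (by positivity)
      _ = A₃ * (2 * D) ^ k * δ ^ k * Real.exp (A₄ * ((k : ℝ) + R) * Real.log ((k : ℝ) + R)) := by
          ring
  constructor
  · intro q hq
    exact Summable.of_nonneg_of_le (fun k => abs_nonneg _)
      (fun k => hbound k q hq) hsum
  · exact tendstoUniformlyOn_tsum_nat hsum
      (fun k q hq => by rw [Real.norm_eq_abs]; exact hbound k q hq)
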